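/- arXiv:2411.15069 — 6 statements merged into one kernel-verified Lean document; each statement's English description precedes it below -/
import Mathlib

section
/- Let $L, c \in \mathbb{R}$, $g \in \mathbb{C}$, and set $r(t) := e^{itL} g$. Let $w, N : \mathbb{R} \to \mathbb{C}$ with $N$ continuous and $w$ differentiable, and define $P(t) := \mathrm{Re}(\overline{r(t)} \, w(t)) + \tfrac{1}{2}|w(t)|^2$. Assume that for every $t \in \mathbb{R}$, $w'(t) = iL\,w(t) + 2ic\,(r(t)+w(t))\,P(t) + N(t)$. Then for every $t \in \mathbb{R}$, $P(t) = \int_0^t \mathrm{Re}\big(\overline{r(y)+w(y)}\, N(y)\big)\,dy + \mathrm{Re}(\overline{g}\, w(0)) + \tfrac{1}{2}|w(0)|^2$. -/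
open Complex intervalIntegral

theorem stmt_0 (L c : ℝ) (g : ℂ) (r : ℝ → ℂ)
    (hr : ∀ t : ℝ, r t = Complex.exp (Complex.I * t * L) * g)
    (w N : ℝ → ℂ) (hN : Continuous N) (hw : Differentiable ℝ w)
    (P : ℝ → ℝ)
    (hP : ∀ t : ℝ, P t = ((starRingEnd ℂ) (r t) * w t).re + (1/2) * ‖w t‖ ^ 2)
    (hode : ∀ t : ℝ, deriv w t
      = Complex.I * (L : ℂ) * w t + 2 * Complex.I * (c : ℂ) * (r t + w t) * (P t : ℂ) + N t) :
    ∀ t : ℝ, P t = (∫ y in (0:ℝ)..t, ((starRingEnd ℂ) (r y + w y) * N y).re)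
      + ((starRingEnd ℂ) g * w 0).re + (1/2) * ‖w 0‖ ^ 2 := by
  -- derivative of r
  have hrC : Continuous r := by
    have : Continuous fun t : ℝ => Complex.exp (Complex.I * t * L) * g := by
      continuity
    exact this.congr fun t => (hr t).symm
  have hr' : ∀ t : ℝ, HasDerivAt r (Complex.I * L * r t) t := by
    intro t
    have h1 : HasDerivAt (fun t : ℝ => Complex.I * (t : ℂ) * (L : ℂ)) (Complex.I * L) t := by
      simpa using ((Complex.ofRealCLM.hasDerivAt (x := t)).const_mul Complex.I).mul_const (L : ℂ)
    have h2 := (h1.cexp.mul_const g)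
    have h3 : HasDerivAt r (Complex.exp (Complex.I * t * L) * (Complex.I * L) * g) t := by
      apply h2.congr_of_eventuallyEq
      filter_upwards with x using hr x
    rw [hr t]; convert h3 using 1; ring
  -- rewrite P in terms of a complex-valued function Q
  set Q : ℝ → ℂ := fun t => (starRingEnd ℂ) (r t) * w t
      + (1/2 : ℂ) * ((starRingEnd ℂ) (w t) * w t) with hQ
  have hPQ : ∀ t, P t = (Q t).re := by
    intro t
    have habs : ((starRingEnd ℂ) (w t) * w t).re = ‖w t‖ ^ 2 := by
      rw [mul_comm, Complex.mul_conj]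
      simp [Complex.sq_norm]
    rw [hP t, hQ]
    simp only [Complex.add_re, show ((1:ℂ)/2) = (((1:ℝ)/2 : ℝ) : ℂ) by norm_num,
      Complex.re_ofReal_mul, habs]
  -- derivative of P
  have hkey : ∀ t : ℝ, HasDerivAt P (((starRingEnd ℂ) (r t + w t) * N t).re) t := by
    intro t
    have hw' : HasDerivAt w (deriv w t) t := (hw t).hasDerivAt
    have hQ' : HasDerivAt Q
        ((starRingEnd ℂ) (Complex.I * L * r t) * w t
          + (starRingEnd ℂ) (r t) * deriv w t
          + (1/2 : ℂ) * ((starRingEnd ℂ) (deriv w t) * w t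
            + (starRingEnd ℂ) (w t) * deriv w t)) t := by
      exact (((hr' t).star.mul hw').add (((hw'.star.mul hw')).const_mul (1/2 : ℂ)))
    have hPQd : HasDerivAt (fun t => (Q t).re)
        (((starRingEnd ℂ) (Complex.I * L * r t) * w t
          + (starRingEnd ℂ) (r t) * deriv w t
          + (1/2 : ℂ) * ((starRingEnd ℂ) (deriv w t) * w t
            + (starRingEnd ℂ) (w t) * deriv w t)).re) t :=
      (Complex.reCLM.hasFDerivAt.comp_hasDerivAt t hQ')
    have hre : ((starRingEnd ℂ) (Complex.I * L * r t) * w t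
          + (starRingEnd ℂ) (r t) * deriv w t
          + (1/2 : ℂ) * ((starRingEnd ℂ) (deriv w t) * w t
            + (starRingEnd ℂ) (w t) * deriv w t)).re
        = ((starRingEnd ℂ) (r t + w t) * N t).re := by
      set X : ℂ := (starRingEnd ℂ) (Complex.I * L * r t) * w t
          + (starRingEnd ℂ) (r t) * deriv w t
          + (1/2 : ℂ) * ((starRingEnd ℂ) (deriv w t) * w t
            + (starRingEnd ℂ) (w t) * deriv w t) with hX
      set Y : ℂ := (starRingEnd ℂ) (r t + w t) * N t with hY
      have h : X + (starRingEnd ℂ) X = Y + (starRingEnd ℂ) Y := by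
        rw [hX, hY, hode t]
        simp only [map_add, map_mul, map_neg, Complex.conj_conj, Complex.conj_I,
          Complex.conj_ofReal, map_ofNat, map_one, map_div₀]
        ring
      rw [Complex.add_conj, Complex.add_conj] at h
      have h3 : (2 : ℝ) * X.re = 2 * Y.re := by exact_mod_cast h
      linarith
    have hEq : P =ᶠ[nhds t] fun t => (Q t).re := by
      filter_upwards with x using hPQ x
    have := hPQd.congr_of_eventuallyEq hEq
    rwa [hre] at this
  intro t
  have hwC : Continuous w := hw.continuous
  have hint : IntervalIntegrable (fun y => ((starRingEnd ℂ) (r y + w y) * N y).re)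
      MeasureTheory.volume 0 t := by
    apply Continuous.intervalIntegrable
    exact (Complex.continuous_re.comp (((hrC.add hwC).star.mul hN)))
  have hftc := intervalIntegral.integral_eq_sub_of_hasDerivAt
    (f := P) (fun y _ => hkey y) hint
  have hP0 : P 0 = ((starRingEnd ℂ) g * w 0).re + (1/2) * ‖w 0‖ ^ 2 := by
    rw [hP 0]
    have : r 0 = g := by rw [hr 0]; simp
    rw [this]
  linarith [hftc]
end

section
/- Let $L, c \in \mathbb{R}$, $g \in \mathbb{C}$, and set $r(t) := e^{itL} g$. Let $w, N : \mathbb{R} \to \mathbb{C}$ with $N$ continuous and $w$ differentiable, and define $P(t) := \mathrm{Re}(\overline{r(t)} \, w(t)) + \tfrac{1}{2}|w(t)|^2$. Assume that for every $t \in \mathbb{R}$, $w'(t) = iL\,w(t) + 2ic\,(r(t)+w(t))\,P(t) + N(t)$. Then $P$ is differentiable and for every $t$, $P'(t) = \mathrm{Re}\big(\overline{r(t)+w(t)}\, N(t)\big)$. -/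
open Complex

private lemma re_eq_of (z u : ℂ)
    (h : z + (starRingEnd ℂ) z = u + (starRingEnd ℂ) u) : z.re = u.re := by
  have := congrArg Complex.re h
  simp [Complex.add_re, Complex.conj_re] at this
  linarith

theorem stmt_1 (L c : ℝ) (g : ℂ) (r : ℝ → ℂ)
    (hr : ∀ t : ℝ, r t = Complex.exp (Complex.I * t * L) * g)
    (w N : ℝ → ℂ) (hN : Continuous N) (hw : Differentiable ℝ w)
    (P : ℝ → ℝ)
    (hP : ∀ t : ℝ, P t = ((starRingEnd ℂ) (r t) * w t).re + (1/2) * ‖w t‖ ^ 2)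
    (hode : ∀ t : ℝ, deriv w t
      = Complex.I * (L : ℂ) * w t + 2 * Complex.I * (c : ℂ) * (r t + w t) * (P t : ℂ) + N t) :
    ∀ t : ℝ, HasDerivAt P (((starRingEnd ℂ) (r t + w t) * N t).re) t := by
  intro t
  -- derivative of r
  have hrfun : r = fun t : ℝ => Complex.exp (Complex.I * t * L) * g := funext hr
  have hr' : HasDerivAt r (Complex.I * L * r t) t := by
    have h0 : HasDerivAt (fun t : ℝ => (t : ℂ)) 1 t := by
      simpa using (hasDerivAt_id t).ofReal_comp
    have h1 : HasDerivAt (fun t : ℝ => Complex.I * t * L) (Complex.I * 1 * L) t :=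
      (h0.const_mul Complex.I).mul_const _
    have h2 := (h1.cexp).mul_const g
    have key : HasDerivAt (fun s : ℝ => Complex.exp (Complex.I * s * L) * g)
        (Complex.I * L * (Complex.exp (Complex.I * t * L) * g)) t := by
      exact h2.congr_deriv (by ring)
    rw [← hrfun] at key
    rwa [← hr t] at key
  have hw' : HasDerivAt w (deriv w t) t := (hw t).hasDerivAt
  -- F : complex version of P
  set a := r t
  set b := w t
  set n := N t
  set p : ℂ := (P t : ℂ)
  set d : ℂ := deriv w t with hd
  have hF : HasDerivAt (fun s => (starRingEnd ℂ) (r s) * w s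
        + (1/2 : ℂ) * ((starRingEnd ℂ) (w s) * w s))
      ((starRingEnd ℂ) (Complex.I * L * a) * b + (starRingEnd ℂ) a * d
        + (1/2 : ℂ) * ((starRingEnd ℂ) d * b + (starRingEnd ℂ) b * d)) t := by
    exact ((hr'.star.mul hw').add (((hw'.star.mul hw')).const_mul (1/2 : ℂ)))
  -- P equals re of the complex function
  have hPfun : P = fun s => ((starRingEnd ℂ) (r s) * w s
        + (1/2 : ℂ) * ((starRingEnd ℂ) (w s) * w s)).re := by
    funext s
    rw [hP s]
    have : ((starRingEnd ℂ) (w s) * w s).re = ‖w s‖ ^ 2 := by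
      rw [← Complex.normSq_eq_norm_sq]
      simp [Complex.mul_re, Complex.normSq_apply]
    simp [Complex.add_re, Complex.mul_re, this]
  have hPd : HasDerivAt P (((starRingEnd ℂ) (Complex.I * L * a) * b + (starRingEnd ℂ) a * d
        + (1/2 : ℂ) * ((starRingEnd ℂ) d * b + (starRingEnd ℂ) b * d)).re) t := by
    rw [hPfun]
    exact (Complex.reCLM.hasFDerivAt.comp_hasDerivAt t hF)
  convert hPd using 1
  have hdval : d = Complex.I * (L : ℝ) * b + 2 * Complex.I * (c : ℂ) * (a + b) * p + n :=
    hode t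
  rw [hdval]
  symm
  apply re_eq_of
  simp only [map_add, map_mul, Complex.conj_conj, Complex.conj_I, Complex.conj_ofReal,
    map_one, map_ofNat, map_div₀, map_neg, neg_neg]
  have hcp : (starRingEnd ℂ) p = p := by simp [p]
  rw [hcp]
  ring
end

section
/- Let $s \in \mathbb{R}$, let $n$ be a nonzero integer, and let $a : \mathbb{Z} \to \mathbb{C}$ be finitely supported with $a_0 = 0$ and $a_{-m} = \overline{a_m}$ for all $m \in \mathbb{Z}$. Then $\sum \frac{\langle n_1\rangle^s \langle n_2\rangle^s \langle n_3\rangle^s}{i\, n_3\, \langle n\rangle^s}\, a_{n_1} a_{n_2} a_{n_3} \;=\; i\, \frac{\langle n\rangle^{2s}}{n}\, |a_n|^2\, a_n$, where the sum ranges over all triples $(n_1, n_2, n_3) \in \mathbb{Z}^3$ satisfying $n_1 + n_2 + n_3 = n$, $n_1 \neq 0$, $n_2 \neq 0$, $n_3 \neq 0$, $n_1 + n_2 \neq 0$, and $(n_2 + n_3)(n_3 + n_1) = 0$. -/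
open Complex

noncomputable def Fres (s : ℝ) (n : ℤ) (a : ℤ → ℂ) (p : ℤ × ℤ × ℤ) : ℂ :=
  ((Real.sqrt (1 + (p.1 : ℝ)^2) ^ s * Real.sqrt (1 + (p.2.1 : ℝ)^2) ^ s *
    Real.sqrt (1 + (p.2.2 : ℝ)^2) ^ s : ℝ) : ℂ)
    / (Complex.I * (p.2.2 : ℂ) * ((Real.sqrt (1 + (n : ℝ)^2) ^ s : ℝ) : ℂ))
    * a p.1 * a p.2.1 * a p.2.2

lemma odd_finsum_zero (f : ℤ → ℂ) (hf : ∀ m, f (-m) = -f m) : ∑ᶠ m, f m = 0 := by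
  have h1 : ∑ᶠ m, f ((Equiv.neg ℤ) m) = ∑ᶠ m, f m := finsum_comp_equiv (Equiv.neg ℤ)
  simp only [Equiv.neg_apply] at h1
  have h2 : ∑ᶠ m, f (-m) = ∑ᶠ m, -f m := by simp only [hf]
  rw [h2, finsum_neg_distrib] at h1
  exact add_self_eq_zero.mp (by linear_combination -h1)

lemma sum_over_M (n : ℤ) (hn : n ≠ 0) (f : ℤ → ℂ) (hfin : (Function.support f).Finite)
    (hodd : ∀ m, f (-m) = -f m) (hf0 : f 0 = 0) :
    ∑ᶠ m ∈ {m : ℤ | m ≠ 0 ∧ m ≠ -n}, f m = f n := by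
  have htot : ∑ᶠ m, f m = 0 := odd_finsum_zero f hodd
  have hM : {m : ℤ | m ≠ 0 ∧ m ≠ -n} = Set.univ \ ({0, -n} : Set ℤ) := by
    ext m
    simp only [Set.mem_setOf_eq, Set.mem_diff, Set.mem_univ, Set.mem_insert_iff,
      Set.mem_singleton_iff, true_and]
    push_neg
    rfl
  have hsplit := finsum_mem_add_sdiff' (f := f) (s := ({0, -n} : Set ℤ)) (t := Set.univ)
    (Set.subset_univ _) (by simpa [Set.univ_inter] using hfin)
  rw [finsum_mem_univ, htot, finsum_mem_pair (show (0:ℤ) ≠ -n by omega), hf0, zero_add] at hsplit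
  rw [hM]
  linear_combination hsplit - hodd n

theorem stmt_5 (s : ℝ) (n : ℤ) (hn : n ≠ 0) (a : ℤ → ℂ)
    (ha : (Function.support a).Finite) (ha0 : a 0 = 0)
    (hreal : ∀ m : ℤ, a (-m) = (starRingEnd ℂ) (a m)) :
    (∑ᶠ (p : ℤ × ℤ × ℤ)
      (_ : p.1 + p.2.1 + p.2.2 = n ∧ p.1 ≠ 0 ∧ p.2.1 ≠ 0 ∧ p.2.2 ≠ 0 ∧
           p.1 + p.2.1 ≠ 0 ∧ (p.2.1 + p.2.2) * (p.2.2 + p.1) = 0),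
        ((Real.sqrt (1 + (p.1 : ℝ)^2) ^ s * Real.sqrt (1 + (p.2.1 : ℝ)^2) ^ s *
          Real.sqrt (1 + (p.2.2 : ℝ)^2) ^ s : ℝ) : ℂ)
          / (Complex.I * (p.2.2 : ℂ) * ((Real.sqrt (1 + (n : ℝ)^2) ^ s : ℝ) : ℂ))
          * a p.1 * a p.2.1 * a p.2.2)
      = Complex.I * ((Real.sqrt (1 + (n : ℝ)^2) ^ (2 * s) / (n : ℝ) : ℝ) : ℂ)
          * (‖a n‖ ^ 2 : ℝ) * a n := by
  set F := Fres s n a with hFdef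
  -- support of F
  have hsuppF : Function.support F ⊆
      (Function.support a) ×ˢ ((Function.support a) ×ˢ (Function.support a)) := by
    intro p hp
    simp only [Set.mem_prod, Function.mem_support]
    refine ⟨?_, ?_, ?_⟩ <;> intro h0 <;> apply hp <;> simp [hFdef, Fres, h0]
  have hFfin : (Function.support F).Finite :=
    (ha.prod (ha.prod ha)).subset hsuppF
  -- the two parametrizing maps
  set M : Set ℤ := {m : ℤ | m ≠ 0 ∧ m ≠ -n} with hMdef
  set eA : ℤ → ℤ × ℤ × ℤ := fun m => (n, m, -m) with heA
  set eB : ℤ → ℤ × ℤ × ℤ := fun m => (m, n, -m) with heB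
  -- f and h, the pullbacks
  set f : ℤ → ℂ := fun m => F (n, m, -m) with hfdef
  set h : ℤ → ℂ := fun m => F (m, n, -m) with hhdef
  have hfsupp : (Function.support f).Finite := by
    apply ha.subset
    intro m hm
    simp only [Function.mem_support] at hm ⊢
    intro h0
    exact hm (by simp [hfdef, hFdef, Fres, h0])
  have hhsupp : (Function.support h).Finite := by
    apply ha.subset
    intro m hm
    simp only [Function.mem_support] at hm ⊢
    intro h0
    exact hm (by simp [hhdef, hFdef, Fres, h0])
  have hsq : ∀ m : ℤ, Real.sqrt (1 + ((-m : ℤ) : ℝ)^2) = Real.sqrt (1 + (m : ℝ)^2) := by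
    intro m; push_cast; rw [neg_sq]
  have hfodd : ∀ m, f (-m) = -f m := by
    intro m
    simp only [hfdef, hFdef, Fres, neg_neg]
    rw [hsq m]
    push_cast
    rw [show Complex.I * -(m : ℂ) * ((Real.sqrt (1 + (n : ℝ)^2) ^ s : ℝ) : ℂ)
        = -(Complex.I * (m : ℂ) * ((Real.sqrt (1 + (n : ℝ)^2) ^ s : ℝ) : ℂ)) from by ring,
      div_neg]
    ring
  have hhodd : ∀ m, h (-m) = -h m := by
    intro m
    simp only [hhdef, hFdef, Fres, neg_neg]
    rw [hsq m]
    push_cast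
    rw [show Complex.I * -(m : ℂ) * ((Real.sqrt (1 + (n : ℝ)^2) ^ s : ℝ) : ℂ)
        = -(Complex.I * (m : ℂ) * ((Real.sqrt (1 + (n : ℝ)^2) ^ s : ℝ) : ℂ)) from by ring,
      div_neg]
    ring
  have hf0 : f 0 = 0 := by simp [hfdef, hFdef, Fres, ha0]
  have hh0 : h 0 = 0 := by simp [hhdef, hFdef, Fres, ha0]
  -- set decomposition
  have hinjA : Set.InjOn eA M := by
    intro x _ y _ hxy
    simpa [heA, Prod.ext_iff] using hxy
  have hinjB : Set.InjOn eB (M \ {n}) := by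
    intro x _ y _ hxy
    simpa [heB, Prod.ext_iff] using hxy
  have hnM : n ∈ M := by simp only [hMdef, Set.mem_setOf_eq]; omega
  have hSeq : {p : ℤ × ℤ × ℤ | p.1 + p.2.1 + p.2.2 = n ∧ p.1 ≠ 0 ∧ p.2.1 ≠ 0 ∧ p.2.2 ≠ 0 ∧
      p.1 + p.2.1 ≠ 0 ∧ (p.2.1 + p.2.2) * (p.2.2 + p.1) = 0}
      = eA '' M ∪ eB '' (M \ {n}) := by
    ext ⟨x, y, z⟩
    simp only [Set.mem_setOf_eq, Set.mem_union, Set.mem_image, Set.mem_diff,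
      Set.mem_singleton_iff, hMdef, heA, heB, Prod.mk.injEq]
    constructor
    · rintro ⟨h1, h2, h3, h4, h5, h6⟩
      rcases mul_eq_zero.1 h6 with h7 | h7
      · exact Or.inl ⟨y, ⟨h3, by omega⟩, by omega, rfl, by omega⟩
      · by_cases hx : x = n
        · exact Or.inl ⟨y, ⟨h3, by omega⟩, by omega, rfl, by omega⟩
        · exact Or.inr ⟨x, ⟨⟨h2, by omega⟩, hx⟩, rfl, by omega, by omega⟩
    · rintro (⟨m, ⟨hm0, hmn⟩, rfl, rfl, rfl⟩ | ⟨m, ⟨⟨hm0, hmn⟩, hmn'⟩, rfl, rfl, rfl⟩)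
      · exact ⟨by omega, hn, hm0, by omega, by omega, by ring⟩
      · exact ⟨by omega, hm0, hn, by omega, by omega, by ring⟩
  have hdisj : Disjoint (eA '' M) (eB '' (M \ {n})) := by
    rw [Set.disjoint_left]
    rintro p ⟨k, hk, rfl⟩ ⟨m, ⟨hmM, hmn⟩, heq⟩
    have h2 := heq
    simp only [heA, heB, Prod.ext_iff] at h2
    exact hmn (by rw [Set.mem_singleton_iff]; omega)
  have hfinA : ((eA '' M) ∩ Function.support F).Finite :=
    hFfin.inter_of_right _
  have hfinB : ((eB '' (M \ {n})) ∩ Function.support F).Finite :=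
    hFfin.inter_of_right _
  have key : (∑ᶠ (p : ℤ × ℤ × ℤ) (_ : p.1 + p.2.1 + p.2.2 = n ∧ p.1 ≠ 0 ∧ p.2.1 ≠ 0 ∧
        p.2.2 ≠ 0 ∧ p.1 + p.2.1 ≠ 0 ∧ (p.2.1 + p.2.2) * (p.2.2 + p.1) = 0), F p)
      = ∑ᶠ p ∈ eA '' M ∪ eB '' (M \ {n}), F p := by
    rw [← hSeq]
    rfl
  rw [show (∑ᶠ (p : ℤ × ℤ × ℤ)
      (_ : p.1 + p.2.1 + p.2.2 = n ∧ p.1 ≠ 0 ∧ p.2.1 ≠ 0 ∧ p.2.2 ≠ 0 ∧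
           p.1 + p.2.1 ≠ 0 ∧ (p.2.1 + p.2.2) * (p.2.2 + p.1) = 0),
        ((Real.sqrt (1 + (p.1 : ℝ)^2) ^ s * Real.sqrt (1 + (p.2.1 : ℝ)^2) ^ s *
          Real.sqrt (1 + (p.2.2 : ℝ)^2) ^ s : ℝ) : ℂ)
          / (Complex.I * (p.2.2 : ℂ) * ((Real.sqrt (1 + (n : ℝ)^2) ^ s : ℝ) : ℂ))
          * a p.1 * a p.2.1 * a p.2.2)
      = ∑ᶠ p ∈ eA '' M ∪ eB '' (M \ {n}), F p from key]
  rw [finsum_mem_union' hdisj hfinA hfinB]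
  rw [finsum_mem_image hinjA, finsum_mem_image hinjB]
  -- the A-branch sum
  have hA : ∑ᶠ m ∈ M, F (eA m) = f n := by
    have : ∀ m, F (eA m) = f m := fun m => rfl
    simp only [this]
    exact sum_over_M n hn f hfsupp hfodd hf0
  -- the B-branch sum is zero
  have hB : ∑ᶠ m ∈ M \ {n}, F (eB m) = 0 := by
    have heq : ∀ m, F (eB m) = h m := fun m => rfl
    simp only [heq]
    have hMsum : ∑ᶠ m ∈ M, h m = h n := sum_over_M n hn h hhsupp hhodd hh0
    have hsplit := finsum_mem_add_sdiff' (f := h) (s := ({n} : Set ℤ)) (t := M)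
      (Set.singleton_subset_iff.mpr hnM) (hhsupp.inter_of_right _)
    rw [finsum_mem_singleton, hMsum] at hsplit
    linear_combination hsplit
  rw [hA, hB, add_zero]
  -- final arithmetic
  have hfn : f n = ((Real.sqrt (1 + (n:ℝ)^2) ^ s * Real.sqrt (1 + (n:ℝ)^2) ^ s *
      Real.sqrt (1 + (n:ℝ)^2) ^ s : ℝ) : ℂ)
      / (Complex.I * ((-n : ℤ) : ℂ) * ((Real.sqrt (1 + (n:ℝ)^2) ^ s : ℝ) : ℂ))
      * a n * a n * (starRingEnd ℂ) (a n) := by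
    simp only [hfdef, hFdef, Fres]
    rw [hsq n, hreal n]
  rw [hfn]
  -- now the pure field computation
  have hr : (0:ℝ) < Real.sqrt (1 + (n:ℝ)^2) := Real.sqrt_pos.mpr (by positivity)
  have h2s : Real.sqrt (1 + (n:ℝ)^2) ^ (2*s) =
      Real.sqrt (1 + (n:ℝ)^2) ^ s * Real.sqrt (1 + (n:ℝ)^2) ^ s := by
    rw [two_mul, Real.rpow_add hr]
  have hx : ((Real.sqrt (1 + (n:ℝ)^2) ^ s : ℝ) : ℂ) ≠ 0 := by
    exact_mod_cast (Real.rpow_pos_of_pos hr s).ne'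
  have hnc : ((n:ℤ):ℂ) ≠ 0 := by exact_mod_cast hn
  have habs : a n * a n * (starRingEnd ℂ) (a n) = ((‖a n‖ ^ 2 : ℝ) : ℂ) * a n := by
    rw [show ((‖a n‖ ^ 2 : ℝ) : ℂ) = (Complex.normSq (a n) : ℂ) by
        rw [Complex.sq_norm], ← Complex.mul_conj]
    ring
  rw [h2s, show ((Real.sqrt (1 + (n:ℝ)^2) ^ s * Real.sqrt (1 + (n:ℝ)^2) ^ s *
      Real.sqrt (1 + (n:ℝ)^2) ^ s : ℝ) : ℂ)
      / (Complex.I * ((-n : ℤ) : ℂ) * ((Real.sqrt (1 + (n:ℝ)^2) ^ s : ℝ) : ℂ))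
      * a n * a n * (starRingEnd ℂ) (a n) =
      ((Real.sqrt (1 + (n:ℝ)^2) ^ s * Real.sqrt (1 + (n:ℝ)^2) ^ s *
      Real.sqrt (1 + (n:ℝ)^2) ^ s : ℝ) : ℂ)
      / (Complex.I * ((-n : ℤ) : ℂ) * ((Real.sqrt (1 + (n:ℝ)^2) ^ s : ℝ) : ℂ))
      * (a n * a n * (starRingEnd ℂ) (a n)) from by ring, habs]
  push_cast
  field_simp
  linear_combination -
    ((‖a n‖ : ℝ) : ℂ) ^ 2 * a n * Complex.I_sq
end

section
/- Let $n_1, n_2, n_3$ be integers with $n_3 \neq 0$, $n_1 + n_2 \neq 0$, $|n_1 + n_2| \leq \tfrac{1}{8}|n_1|$, and $|n_3| \leq \tfrac{1}{8}|n_1|$, and set $n := n_1 + n_2 + n_3$. Then $|n\,(n_1 + n_2)\, n_3| \;<\; |(n_1 + n_2)(n_2 + n_3)(n_3 + n_1)|$. -/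
theorem stmt_10 (n₁ n₂ n₃ : ℤ) (h3 : n₃ ≠ 0) (h12 : n₁ + n₂ ≠ 0)
    (hsmall12 : 8 * |n₁ + n₂| ≤ |n₁|) (hsmall3 : 8 * |n₃| ≤ |n₁|)
    (n : ℤ) (hn : n = n₁ + n₂ + n₃) :
    |n * (n₁ + n₂) * n₃| < |(n₁ + n₂) * (n₂ + n₃) * (n₃ + n₁)| := by
  have ha : (0:ℤ) < |n₁ + n₂| := abs_pos.mpr h12
  have hb : (0:ℤ) < |n₃| := abs_pos.mpr h3
  have h1 : |n| ≤ |n₁ + n₂| + |n₃| := by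
    subst hn; exact abs_add_le _ _
  have h2 : |n₁| - |n| ≤ |n₂ + n₃| := by
    have : |n₁| - |n| ≤ |n₁ - n| := abs_sub_abs_le_abs_sub _ _
    have e : |n₁ - n| = |n₂ + n₃| := by
      subst hn; rw [show n₁ - (n₁ + n₂ + n₃) = -(n₂ + n₃) by ring, abs_neg]
    linarith [this, e.le, e.ge]
  have h4 : |n₁| - |n₃| ≤ |n₃ + n₁| := by
    have h := abs_sub_abs_le_abs_sub n₁ (-n₃)
    rw [abs_neg, show n₁ - -n₃ = n₃ + n₁ by ring] at h
    exact h
  rw [abs_mul, abs_mul, abs_mul, abs_mul]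
  have h0 : (0:ℤ) ≤ |n| := abs_nonneg _
  have key : |n| * |n₃| < |n₂ + n₃| * |n₃ + n₁| := by
    nlinarith [abs_nonneg (n₂+n₃), abs_nonneg (n₃+n₁), abs_nonneg n]
  calc |n| * |n₁ + n₂| * |n₃| = |n₁ + n₂| * (|n| * |n₃|) := by ring
    _ < |n₁ + n₂| * (|n₂ + n₃| * |n₃ + n₁|) := by
        exact mul_lt_mul_of_pos_left key ha
    _ = |n₁ + n₂| * |n₂ + n₃| * |n₃ + n₁| := by ring
end

section
/- For every $s$ with $\tfrac{1}{2} \leq s < \tfrac{2}{3}$ and every $\varepsilon$ with $0 < \varepsilon < \tfrac{2}{3} - s$ there exists a constant $C > 0$ such that for all nonzero integers $n_1, n_2$ with $n := n_1 + n_2 \neq 0$: $\langle n\rangle^{1/3 - 2\varepsilon}\, \big(3\,|n|\,|n_1|\,|n_2|\big)^{1/3 + \varepsilon}\, \langle n_1\rangle^{s}\, \langle n_2\rangle^{s} \;\leq\; C\, \langle n\rangle^{s}\, |n_1|\, |n_2|$. -/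
noncomputable def jb (m : ℤ) : ℝ := Real.sqrt (1 + (m : ℝ) ^ 2)

lemma one_le_jb (m : ℤ) : 1 ≤ jb m := by
  have h : Real.sqrt 1 ≤ Real.sqrt (1 + (m : ℝ) ^ 2) :=
    Real.sqrt_le_sqrt (by nlinarith [sq_nonneg ((m:ℝ))])
  simpa [jb] using h

lemma abs_le_jb (m : ℤ) : |(m : ℝ)| ≤ jb m := by
  have h : Real.sqrt ((m : ℝ) ^ 2) ≤ Real.sqrt (1 + (m : ℝ) ^ 2) :=
    Real.sqrt_le_sqrt (by nlinarith [sq_nonneg ((m:ℝ))])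
  simpa [jb, Real.sqrt_sq_eq_abs] using h

lemma jb_le (m : ℤ) (hm : m ≠ 0) : jb m ≤ Real.sqrt 2 * |(m : ℝ)| := by
  have h1 : (1 : ℝ) ≤ |(m : ℝ)| := by
    have := Int.one_le_abs hm
    exact_mod_cast this
  have h2 : (1 : ℝ) ≤ (m : ℝ) ^ 2 := by
    have := sq_abs ((m : ℝ))
    nlinarith
  calc jb m = Real.sqrt (1 + (m : ℝ) ^ 2) := rfl
    _ ≤ Real.sqrt (2 * (m : ℝ) ^ 2) := Real.sqrt_le_sqrt (by linarith)
    _ = Real.sqrt 2 * |(m : ℝ)| := by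
        rw [Real.sqrt_mul (by norm_num), Real.sqrt_sq_eq_abs]

lemma key_est (s ε A A1 A2 a b c : ℝ)
    (ha : 1 ≤ a) (hb : 1 ≤ b) (hc : 1 ≤ c)
    (hA : 1 ≤ A) (hA1 : 1 ≤ A1) (hA2 : 1 ≤ A2)
    (hAc : A ≤ Real.sqrt 2 * c) (hcA : c ≤ A)
    (hA1a : A1 ≤ Real.sqrt 2 * a) (hA2b : A2 ≤ Real.sqrt 2 * b)
    (hcab : c ≤ 2 * a * b)
    (hs : 1/2 ≤ s) (hε : 0 < ε) (hεs : ε < 2/3 - s) :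
    A ^ (1/3 - 2*ε) * (3 * c * a * b) ^ (1/3 + ε) * A1 ^ s * A2 ^ s
      ≤ (Real.sqrt 2 ^ (1/3 - 2*ε) * 3 ^ (1/3 + ε) * Real.sqrt 2 ^ s * Real.sqrt 2 ^ s
          * 2 ^ (2/3 - ε - s)) * A ^ s * a * b := by
  have hp : (0:ℝ) ≤ 1/3 - 2*ε := by linarith
  have hq : (0:ℝ) ≤ 1/3 + ε := by linarith
  have hs0 : (0:ℝ) ≤ s := by linarith
  have hα : (0:ℝ) ≤ 2/3 - ε - s := by linarith
  have ha0 : (0:ℝ) ≤ a := by linarith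
  have hb0 : (0:ℝ) ≤ b := by linarith
  have hc0 : (0:ℝ) ≤ c := by linarith
  have hapos : (0:ℝ) < a := by linarith
  have hbpos : (0:ℝ) < b := by linarith
  have hcpos : (0:ℝ) < c := by linarith
  have hA0 : (0:ℝ) ≤ A := by linarith
  have hA10 : (0:ℝ) ≤ A1 := by linarith
  have hA20 : (0:ℝ) ≤ A2 := by linarith
  have h2c : (0:ℝ) < Real.sqrt 2 := by positivity
  have h2c0 : (0:ℝ) ≤ Real.sqrt 2 := le_of_lt h2c
  have h3c : (0:ℝ) ≤ 3*c := by linarith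
  have h3ca : (0:ℝ) ≤ 3*c*a := mul_nonneg h3c ha0
  -- step 1 : enlarge bases
  have e1 : A ^ (1/3 - 2*ε) ≤ (Real.sqrt 2 * c) ^ (1/3 - 2*ε) :=
    Real.rpow_le_rpow hA0 hAc hp
  have e3 : A1 ^ s ≤ (Real.sqrt 2 * a) ^ s := Real.rpow_le_rpow hA10 hA1a hs0
  have e4 : A2 ^ s ≤ (Real.sqrt 2 * b) ^ s := Real.rpow_le_rpow hA20 hA2b hs0
  have n1 : (0:ℝ) ≤ (3*c*a*b) ^ (1/3+ε) := Real.rpow_nonneg (by positivity) _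
  have n2 : (0:ℝ) ≤ (Real.sqrt 2 * c) ^ (1/3-2*ε) := Real.rpow_nonneg (by positivity) _
  have n3 : (0:ℝ) ≤ (Real.sqrt 2 * a) ^ s := Real.rpow_nonneg (by positivity) _
  have n4 : (0:ℝ) ≤ (Real.sqrt 2 * b) ^ s := Real.rpow_nonneg (by positivity) _
  have nA1 : (0:ℝ) ≤ A1 ^ s := Real.rpow_nonneg hA10 _
  have nA2 : (0:ℝ) ≤ A2 ^ s := Real.rpow_nonneg hA20 _
  have nA : (0:ℝ) ≤ A ^ (1/3-2*ε) := Real.rpow_nonneg hA0 _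
  have step1 : A ^ (1/3 - 2*ε) * (3 * c * a * b) ^ (1/3 + ε) * A1 ^ s * A2 ^ s
      ≤ (Real.sqrt 2 * c) ^ (1/3 - 2*ε) * (3 * c * a * b) ^ (1/3 + ε)
        * (Real.sqrt 2 * a) ^ s * (Real.sqrt 2 * b) ^ s := by
    apply mul_le_mul _ e4 nA2 (by positivity)
    apply mul_le_mul _ e3 nA1 (by positivity)
    exact mul_le_mul e1 le_rfl n1 n2
  -- step 2 : expand products under rpow
  have m1 : (Real.sqrt 2 * c) ^ (1/3-2*ε) = Real.sqrt 2 ^ (1/3-2*ε) * c ^ (1/3-2*ε) :=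
    Real.mul_rpow h2c0 hc0
  have m2 : (3*c*a*b) ^ (1/3+ε) = 3 ^ (1/3+ε) * c ^ (1/3+ε) * a ^ (1/3+ε) * b ^ (1/3+ε) := by
    rw [Real.mul_rpow h3ca hb0, Real.mul_rpow h3c ha0,
      Real.mul_rpow (by norm_num : (0:ℝ) ≤ 3) hc0]
  have m3 : (Real.sqrt 2 * a) ^ s = Real.sqrt 2 ^ s * a ^ s := Real.mul_rpow h2c0 ha0
  have m4 : (Real.sqrt 2 * b) ^ s = Real.sqrt 2 ^ s * b ^ s := Real.mul_rpow h2c0 hb0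
  -- combine c exponents
  have cc : c ^ (1/3-2*ε) * c ^ (1/3+ε) = c ^ (2/3-ε-s) * c ^ s := by
    rw [← Real.rpow_add hcpos, ← Real.rpow_add hcpos]
    congr 1; ring
  have cab : c ^ (2/3-ε-s) ≤ 2 ^ (2/3-ε-s) * a ^ (2/3-ε-s) * b ^ (2/3-ε-s) := by
    calc c ^ (2/3-ε-s) ≤ (2*a*b) ^ (2/3-ε-s) := Real.rpow_le_rpow hc0 hcab hα
      _ = 2 ^ (2/3-ε-s) * a ^ (2/3-ε-s) * b ^ (2/3-ε-s) := by
          rw [Real.mul_rpow (by linarith : (0:ℝ) ≤ 2*a) hb0,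
            Real.mul_rpow (by norm_num : (0:ℝ) ≤ 2) ha0]
  have cA : c ^ s ≤ A ^ s := Real.rpow_le_rpow hc0 hcA hs0
  have aa : a ^ (1/3+ε) * a ^ s * a ^ (2/3-ε-s) = a := by
    rw [← Real.rpow_add hapos, ← Real.rpow_add hapos,
      show 1/3+ε+s+(2/3-ε-s) = 1 by ring, Real.rpow_one]
  have bb : b ^ (1/3+ε) * b ^ s * b ^ (2/3-ε-s) = b := by
    rw [← Real.rpow_add hbpos, ← Real.rpow_add hbpos,
      show 1/3+ε+s+(2/3-ε-s) = 1 by ring, Real.rpow_one]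
  have K0pos : (0:ℝ) < Real.sqrt 2 ^ (1/3-2*ε) * 3 ^ (1/3+ε) * Real.sqrt 2 ^ s
      * Real.sqrt 2 ^ s := by positivity
  have naq : (0:ℝ) ≤ a ^ (1/3+ε) := Real.rpow_nonneg ha0 _
  have nas : (0:ℝ) ≤ a ^ s := Real.rpow_nonneg ha0 _
  have nbq : (0:ℝ) ≤ b ^ (1/3+ε) := Real.rpow_nonneg hb0 _
  have nbs : (0:ℝ) ≤ b ^ s := Real.rpow_nonneg hb0 _
  have ncα : (0:ℝ) ≤ c ^ (2/3-ε-s) := Real.rpow_nonneg hc0 _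
  have ncs : (0:ℝ) ≤ c ^ s := Real.rpow_nonneg hc0 _
  have nAs : (0:ℝ) ≤ A ^ s := Real.rpow_nonneg hA0 _
  have n2α : (0:ℝ) ≤ 2 ^ (2/3-ε-s) * a ^ (2/3-ε-s) * b ^ (2/3-ε-s) := by positivity
  calc A ^ (1/3 - 2*ε) * (3 * c * a * b) ^ (1/3 + ε) * A1 ^ s * A2 ^ s
      ≤ (Real.sqrt 2 * c) ^ (1/3 - 2*ε) * (3 * c * a * b) ^ (1/3 + ε)
        * (Real.sqrt 2 * a) ^ s * (Real.sqrt 2 * b) ^ s := step1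
    _ = (Real.sqrt 2 ^ (1/3-2*ε) * 3 ^ (1/3+ε) * Real.sqrt 2 ^ s * Real.sqrt 2 ^ s)
        * ((c ^ (1/3-2*ε) * c ^ (1/3+ε)) * (a ^ (1/3+ε) * a ^ s) * (b ^ (1/3+ε) * b ^ s)) := by
          rw [m1, m2, m3, m4]; ring
    _ = (Real.sqrt 2 ^ (1/3-2*ε) * 3 ^ (1/3+ε) * Real.sqrt 2 ^ s * Real.sqrt 2 ^ s)
        * ((c ^ (2/3-ε-s) * c ^ s) * (a ^ (1/3+ε) * a ^ s) * (b ^ (1/3+ε) * b ^ s)) := by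
          rw [cc]
    _ ≤ (Real.sqrt 2 ^ (1/3-2*ε) * 3 ^ (1/3+ε) * Real.sqrt 2 ^ s * Real.sqrt 2 ^ s)
        * (((2 ^ (2/3-ε-s) * a ^ (2/3-ε-s) * b ^ (2/3-ε-s)) * A ^ s)
          * (a ^ (1/3+ε) * a ^ s) * (b ^ (1/3+ε) * b ^ s)) := by
          apply mul_le_mul_of_nonneg_left _ (le_of_lt K0pos)
          apply mul_le_mul _ le_rfl (mul_nonneg nbq nbs) _
          · apply mul_le_mul _ le_rfl (mul_nonneg naq nas) _
            · exact mul_le_mul cab cA ncs n2α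
            · exact mul_nonneg n2α nAs
          · exact mul_nonneg (mul_nonneg n2α nAs) (mul_nonneg naq nas)
    _ = (Real.sqrt 2 ^ (1/3-2*ε) * 3 ^ (1/3+ε) * Real.sqrt 2 ^ s * Real.sqrt 2 ^ s
          * 2 ^ (2/3-ε-s)) * A ^ s
        * (a ^ (1/3+ε) * a ^ s * a ^ (2/3-ε-s)) * (b ^ (1/3+ε) * b ^ s * b ^ (2/3-ε-s)) := by
          ring
    _ = _ := by rw [aa, bb]

theorem stmt_12 :
    ∀ s : ℝ, 1/2 ≤ s → s < 2/3 → ∀ ε : ℝ, 0 < ε → ε < 2/3 - s →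
      ∃ C : ℝ, 0 < C ∧ ∀ n₁ n₂ : ℤ, n₁ ≠ 0 → n₂ ≠ 0 → n₁ + n₂ ≠ 0 →
        jb (n₁ + n₂) ^ (1/3 - 2*ε)
            * (3 * |((n₁ + n₂ : ℤ) : ℝ)| * |(n₁ : ℝ)| * |(n₂ : ℝ)|) ^ (1/3 + ε)
            * jb n₁ ^ s * jb n₂ ^ s
          ≤ C * jb (n₁ + n₂) ^ s * |(n₁ : ℝ)| * |(n₂ : ℝ)| := by
  intro s hs hs2 ε hε hεs
  refine ⟨Real.sqrt 2 ^ (1/3 - 2*ε) * 3 ^ (1/3 + ε) * Real.sqrt 2 ^ s * Real.sqrt 2 ^ s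
    * 2 ^ (2/3 - ε - s), by positivity, ?_⟩
  intro n₁ n₂ hn1 hn2 hn
  have ha : (1:ℝ) ≤ |(n₁ : ℝ)| := by exact_mod_cast Int.one_le_abs hn1
  have hb : (1:ℝ) ≤ |(n₂ : ℝ)| := by exact_mod_cast Int.one_le_abs hn2
  have hc : (1:ℝ) ≤ |((n₁ + n₂ : ℤ) : ℝ)| := by exact_mod_cast Int.one_le_abs hn
  have hcab : |((n₁ + n₂ : ℤ) : ℝ)| ≤ 2 * |(n₁ : ℝ)| * |(n₂ : ℝ)| := by
    have h1 : |((n₁ + n₂ : ℤ) : ℝ)| ≤ |(n₁ : ℝ)| + |(n₂ : ℝ)| := by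
      push_cast
      exact abs_add_le _ _
    nlinarith [abs_nonneg ((n₁:ℝ)), abs_nonneg ((n₂:ℝ))]
  exact key_est s ε (jb (n₁ + n₂)) (jb n₁) (jb n₂) |(n₁ : ℝ)| |(n₂ : ℝ)|
    |((n₁ + n₂ : ℤ) : ℝ)| ha hb hc (one_le_jb _) (one_le_jb _) (one_le_jb _)
    (jb_le _ hn) (abs_le_jb _) (jb_le _ hn1) (jb_le _ hn2) hcab hs hε hεs
end

section
/- Fix $s \in [\tfrac{1}{2}, \tfrac{2}{3}]$ and $\varepsilon \in (0, \tfrac{1}{100})$. For a nonzero integer $n$ and a real $L \geq 1$, define $w_Z(n, L) := L^{1/2 + \varepsilon}$ if $L < |n|$ and $w_Z(n, L) := L^{2/3 + \varepsilon}$ if $L \geq |n|$; and define $w_X(n, L) := \langle n\rangle^{2s - 1 + \varepsilon}\, L^{-1/2 + \varepsilon}$ if $L < |n|$ and $w_X(n, L) := L^{-1/3 + \varepsilon}$ if $L \geq |n|$. Then there exists a constant $C > 0$ such that for every nonzero integer $n$ and all reals $L_1, L_2, A \geq 1$: (i) if $L_1 \geq L_2$ then $\langle n\rangle^{2s-1}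 \leq C\, w_Z(n, L_1)\, w_X(n, L_2)$; and (ii) if $L_2 \geq L_1$ and $A \geq L_2/2$ then $\langle n\rangle^{2s-1} \leq C\, A\, w_X(n, L_2)$. -/
theorem stmt_19 (s ε : ℝ) (hs : 1/2 ≤ s) (hs' : s ≤ 2/3) (hε : 0 < ε) (hε' : ε < 1/100)
    (wZ wX : ℤ → ℝ → ℝ)
    (hwZ : ∀ (n : ℤ) (L : ℝ), 1 ≤ L →
      wZ n L = if L < |(n : ℝ)| then L ^ (1/2 + ε) else L ^ (2/3 + ε))
    (hwX : ∀ (n : ℤ) (L : ℝ), 1 ≤ L →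
      wX n L = if L < |(n : ℝ)| then jb n ^ (2*s - 1 + ε) * L ^ (-(1:ℝ)/2 + ε)
               else L ^ (-(1:ℝ)/3 + ε)) :
    ∃ C : ℝ, 0 < C ∧ ∀ n : ℤ, n ≠ 0 → ∀ L₁ L₂ A : ℝ, 1 ≤ L₁ → 1 ≤ L₂ → 1 ≤ A →
      (L₂ ≤ L₁ → jb n ^ (2*s - 1) ≤ C * wZ n L₁ * wX n L₂) ∧
      (L₁ ≤ L₂ → L₂ / 2 ≤ A → jb n ^ (2*s - 1) ≤ C * A * wX n L₂) := by
  refine ⟨4, by norm_num, ?_⟩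
  intro n hn L₁ L₂ A hL₁ hL₂ hA
  have hL₁0 : (0:ℝ) < L₁ := lt_of_lt_of_le one_pos hL₁
  have hL₂0 : (0:ℝ) < L₂ := lt_of_lt_of_le one_pos hL₂
  have one_le_rpow : ∀ (x : ℝ) (r : ℝ), 1 ≤ x → 0 ≤ r → 1 ≤ x ^ r := by
    intro x r hx hr
    have := Real.rpow_le_rpow_of_exponent_le hx hr
    rwa [Real.rpow_zero] at this
  have hjb1 : (1:ℝ) ≤ jb n := by
    unfold jb
    calc (1:ℝ) = Real.sqrt 1 := Real.sqrt_one.symm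
      _ ≤ _ := Real.sqrt_le_sqrt (by nlinarith [sq_nonneg ((n:ℝ))])
  have hjb0 : (0:ℝ) < jb n := lt_of_lt_of_le one_pos hjb1
  have hn1 : (1:ℝ) ≤ |(n:ℝ)| := by
    rw [← Int.cast_abs]
    exact_mod_cast Int.one_le_abs hn
  have hn0 : (0:ℝ) < |(n:ℝ)| := lt_of_lt_of_le one_pos hn1
  have hnsq : (1:ℝ) ≤ (n:ℝ)^2 := by
    nlinarith [mul_le_mul hn1 hn1 zero_le_one (abs_nonneg ((n:ℝ))), sq_abs ((n:ℝ))]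
  have hjble : jb n ≤ 2 * |(n:ℝ)| := by
    unfold jb
    have h2 : (1 + (n:ℝ)^2) ≤ (2*|(n:ℝ)|)^2 := by
      rw [mul_pow, sq_abs]; nlinarith
    calc Real.sqrt (1+(n:ℝ)^2) ≤ Real.sqrt ((2*|(n:ℝ)|)^2) := Real.sqrt_le_sqrt h2
      _ = 2*|(n:ℝ)| := Real.sqrt_sq (by positivity)
  have hn13pos : (0:ℝ) < |(n:ℝ)| ^ ((1:ℝ)/3) := Real.rpow_pos_of_pos hn0 _
  have hj13 : jb n ^ (2*s - 1) ≤ 2 * |(n:ℝ)| ^ ((1:ℝ)/3) := by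
    have h2n : (1:ℝ) ≤ 2 * |(n:ℝ)| := by linarith
    calc jb n ^ (2*s-1) ≤ (2*|(n:ℝ)|) ^ (2*s-1) :=
            Real.rpow_le_rpow (le_of_lt hjb0) hjble (by linarith)
      _ ≤ (2*|(n:ℝ)|) ^ ((1:ℝ)/3) :=
            Real.rpow_le_rpow_of_exponent_le h2n (by linarith)
      _ = 2 ^ ((1:ℝ)/3) * |(n:ℝ)| ^ ((1:ℝ)/3) := Real.mul_rpow (by norm_num) (abs_nonneg _)
      _ ≤ 2 * |(n:ℝ)| ^ ((1:ℝ)/3) := by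
            have h3 : (2:ℝ) ^ ((1:ℝ)/3) ≤ 2 ^ (1:ℝ) :=
              Real.rpow_le_rpow_of_exponent_le (by norm_num) (by norm_num)
            rw [Real.rpow_one] at h3
            exact mul_le_mul_of_nonneg_right h3 (le_of_lt hn13pos)
  have hjbe : jb n ^ (2*s - 1) ≤ jb n ^ (2*s - 1 + ε) :=
    Real.rpow_le_rpow_of_exponent_le hjb1 (by linarith)
  have hjbe0 : (0:ℝ) < jb n ^ (2*s - 1 + ε) := Real.rpow_pos_of_pos hjb0 _
  rw [hwZ n L₁ hL₁, hwX n L₂ hL₂]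
  constructor
  · -- case (i): L₂ ≤ L₁
    intro h12
    by_cases hc2 : L₂ < |(n:ℝ)|
    · rw [if_pos hc2]
      have hZ : L₁ ^ ((1:ℝ)/2 + ε) ≤
          (if L₁ < |(n:ℝ)| then L₁ ^ (1/2 + ε) else L₁ ^ (2/3 + ε)) := by
        split
        · norm_num
        · exact Real.rpow_le_rpow_of_exponent_le hL₁ (by linarith)
      have hZ0 : (0:ℝ) < L₁ ^ ((1:ℝ)/2 + ε) := Real.rpow_pos_of_pos hL₁0 _
      have hY0 : (0:ℝ) < L₂ ^ (-(1:ℝ)/2 + ε) := Real.rpow_pos_of_pos hL₂0 _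
      have hkey : (1:ℝ) ≤ L₁ ^ ((1:ℝ)/2 + ε) * L₂ ^ (-(1:ℝ)/2 + ε) := by
        have h1 : L₂ ^ ((1:ℝ)/2 + ε) ≤ L₁ ^ ((1:ℝ)/2 + ε) :=
          Real.rpow_le_rpow (le_of_lt hL₂0) h12 (by linarith)
        have h2 : L₂ ^ ((1:ℝ)/2 + ε) * L₂ ^ (-(1:ℝ)/2 + ε) = L₂ ^ (2*ε) := by
          rw [← Real.rpow_add hL₂0]; ring_nf
        have h3 : (1:ℝ) ≤ L₂ ^ (2*ε) := one_le_rpow L₂ _ hL₂ (by linarith)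
        calc (1:ℝ) ≤ L₂ ^ (2*ε) := h3
          _ = L₂ ^ ((1:ℝ)/2 + ε) * L₂ ^ (-(1:ℝ)/2 + ε) := h2.symm
          _ ≤ L₁ ^ ((1:ℝ)/2 + ε) * L₂ ^ (-(1:ℝ)/2 + ε) :=
              mul_le_mul_of_nonneg_right h1 (le_of_lt hY0)
      set Z := (if L₁ < |(n:ℝ)| then L₁ ^ (1/2 + ε) else L₁ ^ (2/3 + ε)) with hZdef
      have hZpos : (0:ℝ) < Z := lt_of_lt_of_le hZ0 hZ
      have hkey2 : (1:ℝ) ≤ Z * L₂ ^ (-(1:ℝ)/2 + ε) :=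
        le_trans hkey (mul_le_mul_of_nonneg_right hZ (le_of_lt hY0))
      have hp : (0:ℝ) < Z * (jb n ^ (2*s-1+ε) * L₂ ^ (-(1:ℝ)/2 + ε)) := by positivity
      calc jb n ^ (2*s-1) ≤ jb n ^ (2*s-1+ε) := hjbe
        _ ≤ jb n ^ (2*s-1+ε) * (Z * L₂ ^ (-(1:ℝ)/2 + ε)) :=
            le_mul_of_one_le_right (le_of_lt hjbe0) hkey2
        _ ≤ 4 * Z * (jb n ^ (2*s-1+ε) * L₂ ^ (-(1:ℝ)/2 + ε)) := by linarith [hp]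
    · rw [if_neg hc2]
      push_neg at hc2
      have hc1 : ¬ (L₁ < |(n:ℝ)|) := by push_neg; linarith
      rw [if_neg hc1]
      have hY0 : (0:ℝ) < L₂ ^ (-(1:ℝ)/3 + ε) := Real.rpow_pos_of_pos hL₂0 _
      have h1 : L₂ ^ (2/3 + ε) ≤ L₁ ^ (2/3 + ε) :=
        Real.rpow_le_rpow (le_of_lt hL₂0) h12 (by linarith)
      have h2 : |(n:ℝ)| ^ ((1:ℝ)/3) ≤ L₂ ^ (2/3 + ε) * L₂ ^ (-(1:ℝ)/3 + ε) := by
        rw [← Real.rpow_add hL₂0]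
        have ha : |(n:ℝ)| ^ ((1:ℝ)/3) ≤ L₂ ^ ((1:ℝ)/3) :=
          Real.rpow_le_rpow (abs_nonneg _) hc2 (by norm_num)
        have hb : L₂ ^ ((1:ℝ)/3) ≤ L₂ ^ (2/3 + ε + (-(1:ℝ)/3 + ε)) :=
          Real.rpow_le_rpow_of_exponent_le hL₂ (by linarith)
        linarith
      have h3 : |(n:ℝ)| ^ ((1:ℝ)/3) ≤ L₁ ^ (2/3 + ε) * L₂ ^ (-(1:ℝ)/3 + ε) :=
        le_trans h2 (mul_le_mul_of_nonneg_right h1 (le_of_lt hY0))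
      have hp : (0:ℝ) < L₁ ^ (2/3 + ε) * L₂ ^ (-(1:ℝ)/3 + ε) := by positivity
      calc jb n ^ (2*s-1) ≤ 2 * |(n:ℝ)| ^ ((1:ℝ)/3) := hj13
        _ ≤ 2 * (L₁ ^ (2/3 + ε) * L₂ ^ (-(1:ℝ)/3 + ε)) := by linarith
        _ ≤ 4 * L₁ ^ (2/3 + ε) * L₂ ^ (-(1:ℝ)/3 + ε) := by linarith [hp]
  · -- case (ii): L₁ ≤ L₂, L₂/2 ≤ A
    intro h12 hA2
    by_cases hc2 : L₂ < |(n:ℝ)|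
    · rw [if_pos hc2]
      have hY0 : (0:ℝ) < L₂ ^ (-(1:ℝ)/2 + ε) := Real.rpow_pos_of_pos hL₂0 _
      have hkey : (1:ℝ) ≤ 2 * (A * L₂ ^ (-(1:ℝ)/2 + ε)) := by
        have h1 : L₂ ^ (-(1:ℝ)/2) ≤ L₂ ^ (-(1:ℝ)/2 + ε) :=
          Real.rpow_le_rpow_of_exponent_le hL₂ (by linarith)
        have h2 : L₂ * L₂ ^ (-(1:ℝ)/2) = L₂ ^ ((1:ℝ)/2) := by
          rw [show ((1:ℝ)/2) = 1 + (-(1:ℝ)/2) by norm_num, Real.rpow_add hL₂0,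
            Real.rpow_one]
        have h3 : (1:ℝ) ≤ L₂ ^ ((1:ℝ)/2) := one_le_rpow L₂ _ hL₂ (by norm_num)
        have h4 : L₂ / 2 * L₂ ^ (-(1:ℝ)/2 + ε) ≤ A * L₂ ^ (-(1:ℝ)/2 + ε) :=
          mul_le_mul_of_nonneg_right hA2 (le_of_lt hY0)
        have h5 : L₂ * L₂ ^ (-(1:ℝ)/2) ≤ L₂ * L₂ ^ (-(1:ℝ)/2 + ε) :=
          mul_le_mul_of_nonneg_left h1 (le_of_lt hL₂0)
        linarith
      have hp : (0:ℝ) < A * (jb n ^ (2*s-1+ε) * L₂ ^ (-(1:ℝ)/2 + ε)) := by positivity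
      calc jb n ^ (2*s-1) ≤ jb n ^ (2*s-1+ε) := hjbe
        _ ≤ jb n ^ (2*s-1+ε) * (2 * (A * L₂ ^ (-(1:ℝ)/2 + ε))) :=
            le_mul_of_one_le_right (le_of_lt hjbe0) hkey
        _ ≤ 4 * A * (jb n ^ (2*s-1+ε) * L₂ ^ (-(1:ℝ)/2 + ε)) := by linarith [hp]
    · rw [if_neg hc2]
      push_neg at hc2
      have hY0 : (0:ℝ) < L₂ ^ (-(1:ℝ)/3 + ε) := Real.rpow_pos_of_pos hL₂0 _
      have hkey : |(n:ℝ)| ^ ((1:ℝ)/3) ≤ 2 * (A * L₂ ^ (-(1:ℝ)/3 + ε)) := by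
        have h1 : L₂ ^ (-(1:ℝ)/3) ≤ L₂ ^ (-(1:ℝ)/3 + ε) :=
          Real.rpow_le_rpow_of_exponent_le hL₂ (by linarith)
        have h2 : L₂ * L₂ ^ (-(1:ℝ)/3) = L₂ ^ ((2:ℝ)/3) := by
          rw [show ((2:ℝ)/3) = 1 + (-(1:ℝ)/3) by norm_num, Real.rpow_add hL₂0,
            Real.rpow_one]
        have h3 : |(n:ℝ)| ^ ((1:ℝ)/3) ≤ L₂ ^ ((2:ℝ)/3) := by
          calc |(n:ℝ)| ^ ((1:ℝ)/3) ≤ L₂ ^ ((1:ℝ)/3) :=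
              Real.rpow_le_rpow (abs_nonneg _) hc2 (by norm_num)
            _ ≤ L₂ ^ ((2:ℝ)/3) := Real.rpow_le_rpow_of_exponent_le hL₂ (by norm_num)
        have h4 : L₂ / 2 * L₂ ^ (-(1:ℝ)/3 + ε) ≤ A * L₂ ^ (-(1:ℝ)/3 + ε) :=
          mul_le_mul_of_nonneg_right hA2 (le_of_lt hY0)
        have h5 : L₂ * L₂ ^ (-(1:ℝ)/3) ≤ L₂ * L₂ ^ (-(1:ℝ)/3 + ε) :=
          mul_le_mul_of_nonneg_left h1 (le_of_lt hL₂0)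
        linarith
      calc jb n ^ (2*s-1) ≤ 2 * |(n:ℝ)| ^ ((1:ℝ)/3) := hj13
        _ ≤ 2 * (2 * (A * L₂ ^ (-(1:ℝ)/3 + ε))) := by linarith
        _ = 4 * A * L₂ ^ (-(1:ℝ)/3 + ε) := by ring
end
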